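/- Let G be a finite simple bipartite connected graph. Then G has a perfect matching if and only if |A| ≤ |N_G(A)| for every independent set of vertices A of G. -/

import Mathlib

/-- A graph is bipartite if its vertices can be 2-coloured so that adjacent
vertices get distinct colours. -/
def IsBipartite {V : Type} (G : SimpleGraph V) : Prop :=
  ∃ f : V → Bool, ∀ i j : V, G.Adj i j → f i ≠ f j

theorem marriage_theorem {V : Type} [Fintype V] [DecidableEq V]
    (G : SimpleGraph V) [DecidableRel G.Adj]
    (hbip : IsBipartite G) (hconn : G.Connected) :
    (∃ M : G.Subgraph, M.IsPerfectMatching) ↔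
      ∀ A : Finset V, (∀ u ∈ A, ∀ w ∈ A, ¬ G.Adj u w) →
        A.card ≤ (Finset.univ.filter (fun v => ∃ u ∈ A, G.Adj u v)).card := by
  constructor
  · rintro ⟨M, hM⟩ A _hA
    rw [SimpleGraph.Subgraph.isPerfectMatching_iff] at hM
    -- partner function
    have part : ∀ v : V, ∃ w, M.Adj v w ∧ ∀ w', M.Adj v w' → w' = w := fun v =>
      (hM v).imp (fun w hw => ⟨hw.1, hw.2⟩)
    choose p hp hpu using part
    apply Finset.card_le_card_of_injOn p
    · intro a _ha
      simp only [Finset.mem_coe, Finset.mem_filter, Finset.mem_univ, true_and]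
      exact ⟨a, _ha, M.adj_sub (hp a)⟩
    · intro a ha b hb hab
      have h1 : M.Adj (p a) a := (hp a).symm
      have h2 : M.Adj (p a) b := hab ▸ (hp b).symm
      exact (hpu (p a) a h1).trans (hpu (p a) b h2).symm
  · intro hA
    obtain ⟨c, hc⟩ := hbip
    -- Hall injection from each colour class into the graph
    have key : ∀ b : Bool, ∃ f : {v : V // c v = b} → V,
        Function.Injective f ∧ ∀ x, G.Adj x.val (f x) := by
      intro b
      have := (Finset.all_card_le_biUnion_card_iff_exists_injective
        (fun x : {v : V // c v = b} => G.neighborFinset x.val)).mp ?_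
      · obtain ⟨f, hf1, hf2⟩ := this
        exact ⟨f, hf1, fun x => (SimpleGraph.mem_neighborFinset _ _ _).mp (hf2 x)⟩
      intro s
      have hind : ∀ u ∈ s.image Subtype.val, ∀ w ∈ s.image Subtype.val, ¬ G.Adj u w := by
        intro u hu w hw hadj
        simp only [Finset.mem_image] at hu hw
        obtain ⟨⟨u', hu'⟩, _, rfl⟩ := hu
        obtain ⟨⟨w', hw'⟩, _, rfl⟩ := hw
        exact hc _ _ hadj (hu'.trans hw'.symm)
      have h1 := hA _ hind
      have hcard : (s.image Subtype.val).card = s.card :=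
        Finset.card_image_of_injective _ Subtype.val_injective
      have heq : (Finset.univ.filter (fun v => ∃ u ∈ s.image Subtype.val, G.Adj u v))
          = s.biUnion (fun x => G.neighborFinset x.val) := by
        ext v
        simp only [Finset.mem_filter, Finset.mem_univ, true_and, Finset.mem_biUnion,
          Finset.mem_image, SimpleGraph.mem_neighborFinset]
        constructor
        · rintro ⟨u, ⟨x, hx, rfl⟩, hadj⟩
          exact ⟨x, hx, hadj⟩
        · rintro ⟨x, hx, hadj⟩
          exact ⟨x.val, ⟨x, hx, rfl⟩, hadj⟩
      rw [hcard, heq] at h1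
      exact h1
    obtain ⟨ft, hftinj, hftadj⟩ := key true
    obtain ⟨ff, hffinj, hffadj⟩ := key false
    -- the colour of a Hall partner is the opposite colour
    have hfc : ∀ x : {v : V // c v = true}, c (ft x) = false := by
      intro x
      have := hc _ _ (hftadj x)
      rw [x.prop] at this
      exact Bool.eq_false_iff.mpr (fun h => this h.symm)
    have hfc' : ∀ x : {v : V // c v = false}, c (ff x) = true := by
      intro x
      have := hc _ _ (hffadj x)
      rw [x.prop] at this
      cases h : c (ff x)
      · exact absurd h.symm this
      · rfl
    set F : {v : V // c v = true} → {v : V // c v = false} := fun x => ⟨ft x, hfc x⟩ with hF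
    have hFinj : Function.Injective F := fun a b h => hftinj (congrArg Subtype.val h)
    have hFyinj : Function.Injective (fun x : {v : V // c v = false} =>
        (⟨ff x, hfc' x⟩ : {v : V // c v = true})) :=
      fun a b h => hffinj (congrArg Subtype.val h)
    have hcardeq : Fintype.card {v : V // c v = true} = Fintype.card {v : V // c v = false} :=
      le_antisymm (Fintype.card_le_of_injective F hFinj)
        (Fintype.card_le_of_injective _ hFyinj)
    have hFbij : Function.Bijective F :=
      (Fintype.bijective_iff_injective_and_card F).mpr ⟨hFinj, hcardeq⟩
    set e := Equiv.ofBijective F hFbij with he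
    -- the pairing function
    set m : V → V := fun v =>
      if h : c v = true then (e ⟨v, h⟩).val
      else (e.symm ⟨v, Bool.eq_false_iff.mpr h⟩).val with hm
    have hmt : ∀ v (h : c v = true), m v = (e ⟨v, h⟩).val := by
      intro v h; simp only [hm, dif_pos h]
    have hmf : ∀ v (h : c v = false), m v = (e.symm ⟨v, h⟩).val := by
      intro v h
      have h' : ¬ c v = true := by simp [h]
      simp only [hm, dif_neg h']
    have hadjm : ∀ v, G.Adj v (m v) := by
      intro v
      cases h : c v
      · rw [hmf v h]
        have : (e (e.symm ⟨v, h⟩)).val = v := by rw [Equiv.apply_symm_apply]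
        have hadj := hftadj (e.symm ⟨v, h⟩)
        rw [he] at this
        simp only [Equiv.ofBijective_apply, hF] at this
        rw [this] at hadj
        exact hadj.symm
      · rw [hmt v h]
        rw [he]
        simp only [Equiv.ofBijective_apply, hF]
        exact hftadj ⟨v, h⟩
    have hinv : ∀ v, m (m v) = v := by
      intro v
      cases h : c v
      · have h1 := hmf v h
        have h2 : c (m v) = true := by rw [h1]; exact (e.symm ⟨v, h⟩).prop
        rw [hmt (m v) h2]
        have : (⟨m v, h2⟩ : {v : V // c v = true}) = e.symm ⟨v, h⟩ := Subtype.ext h1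
        rw [this, Equiv.apply_symm_apply]
      · have h1 := hmt v h
        have h2 : c (m v) = false := by rw [h1]; exact (e ⟨v, h⟩).prop
        rw [hmf (m v) h2]
        have : (⟨m v, h2⟩ : {v : V // c v = false}) = e ⟨v, h⟩ := Subtype.ext h1
        rw [this, Equiv.symm_apply_apply]
    refine ⟨⟨Set.univ, fun v w => G.Adj v w ∧ m v = w, fun {v w} h => h.1,
      fun {v w} _ => trivial, ?_⟩, ?_⟩
    · constructor; rintro v w ⟨ha, rfl⟩
      exact ⟨ha.symm, hinv v⟩
    · rw [SimpleGraph.Subgraph.isPerfectMatching_iff]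
      intro v
      exact ⟨m v, ⟨hadjm v, rfl⟩, fun w hw => hw.2.symm⟩
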